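/- Supermartingale induced by an RASM: In the setting of the stochastic dynamical system with trajectory process (x_t)_{t∈ℕ} started at x₀ ∈ 𝒳₀, let V : 𝒳 → ℝ be an RASM with respect to 𝒳_t, 𝒳_u and p ∈ [0,1), and write c = 1/(1−p). Let (𝓕_t)_{t∈ℕ} be the filtration where 𝓕_t is generated by (x_0, x_1, …, x_t). Define the process (Y_t)_{t∈ℕ} by: Y_t = V(x_t) if x_i ∉ 𝒳_t and V(x_i) < c for all i ≤ t; Y_t = 0 if there exists i ≤ t with x_i ∈ 𝒳_t and V(x_j) < c for all j ≤ i; and Y_t = c otherwise. Then (Y_t)_{t∈ℕ} is a nonnegative supermartingale with respect to (𝓕_t): each Y_t is 𝓕_t-measurable, integrable, Y_t ≥ 0, and 𝔼[Y_{t+1} ∣ 𝓕_t] ≤ Y_t almost surely. -/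

import Mathlib

open MeasureTheory ProbabilityTheory
open scoped Classical

/-- The (topological) support of a measure: the set of points all of whose open
neighbourhoods have positive measure. -/
def measureSupport {E : Type*} [TopologicalSpace E] [MeasurableSpace E]
    (d : Measure E) : Set E :=
  {w | ∀ U : Set E, IsOpen U → w ∈ U → 0 < d U}

lemma measureSupport_isClosed {E : Type*} [TopologicalSpace E] [MeasurableSpace E]
    (d : Measure E) : IsClosed (measureSupport d) := by
  rw [← isOpen_compl_iff]
  rw [isOpen_iff_forall_mem_open]
  intro w hw
  simp only [measureSupport, Set.mem_compl_iff, Set.mem_setOf_eq, not_forall] at hw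
  obtain ⟨U, hU, hwU, hdU⟩ := hw
  refine ⟨U, fun y hy hymem => ?_, hU, hwU⟩
  exact absurd (hymem U hU hy) hdU

lemma measureSupport_compl_null {E : Type*} [TopologicalSpace E] [MeasurableSpace E]
    [SecondCountableTopology E]
    (d : Measure E) : d (measureSupport d)ᶜ = 0 := by
  apply measure_null_of_locally_null
  intro x hx
  simp only [measureSupport, Set.mem_compl_iff, Set.mem_setOf_eq, not_forall] at hx
  obtain ⟨U, hU, hxU, hdU⟩ := hx
  refine ⟨U, ?_, by simpa using hdU⟩
  exact Filter.mem_inf_of_left (hU.mem_nhds hxU)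

/-- Freezing lemma: expectation of a bounded measurable function of a pair of
independent random variables, as an iterated integral. -/
lemma freeze_integral {Ω α β : Type*} [MeasurableSpace Ω] [MeasurableSpace α]
    [MeasurableSpace β]
    (μ : Measure Ω) [IsProbabilityMeasure μ] (d : Measure β) [IsProbabilityMeasure d]
    (Z : Ω → α) (Wf : Ω → β) (hZ : Measurable Z) (hW : Measurable Wf)
    (hind : IndepFun Z Wf μ) (hlaw : μ.map Wf = d)
    (g : α × β → ℝ) (hg : Measurable g) (C : ℝ) (hgC : ∀ p, |g p| ≤ C) :
    ∫ ϖ, g (Z ϖ, Wf ϖ) ∂μ = ∫ ϖ, (∫ w, g (Z ϖ, w) ∂d) ∂μ := by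
  have hmap : μ.map (fun ϖ => (Z ϖ, Wf ϖ)) = (μ.map Z).prod d := by
    rw [← hlaw]
    exact (indepFun_iff_map_prod_eq_prod_map_map hZ.aemeasurable hW.aemeasurable).mp hind
  have hmZ : IsProbabilityMeasure (μ.map Z) := Measure.isProbabilityMeasure_map hZ.aemeasurable
  have hint : Integrable g ((μ.map Z).prod d) := by
    refine Integrable.mono' (integrable_const C) hg.aestronglyMeasurable ?_
    exact Filter.Eventually.of_forall fun p => by simpa using hgC p
  calc ∫ ϖ, g (Z ϖ, Wf ϖ) ∂μ
      = ∫ p, g p ∂((μ.map Z).prod d) := by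
        rw [← hmap, integral_map (hZ.prodMk hW).aemeasurable hg.aestronglyMeasurable]
    _ = ∫ z, ∫ w, g (z, w) ∂d ∂(μ.map Z) := integral_prod g hint
    _ = ∫ ϖ, (∫ w, g (Z ϖ, w) ∂d) ∂μ := by
        rw [integral_map hZ.aemeasurable]
        exact (hg.stronglyMeasurable.integral_prod_right').aestronglyMeasurable

/-- Recursively computed trajectory as a function of the noise inputs. -/
noncomputable def trajFun {X U W : Type*} (f : X → U → W → X) (π : X → U) (x₀ : X) (t : ℕ) :
    ℕ → (↥(Finset.range t) → W) → X
  | 0, _ => x₀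
  | (i+1), z =>
      if h : i ∈ Finset.range t then
        f (trajFun f π x₀ t i z) (π (trajFun f π x₀ t i z)) (z ⟨i, h⟩)
      else x₀

lemma trajFun_measurable {m n q : ℕ}
    (f : (Fin m → ℝ) → (Fin n → ℝ) → (Fin q → ℝ) → (Fin m → ℝ))
    (hf : Measurable fun xuw : (Fin m → ℝ) × (Fin n → ℝ) × (Fin q → ℝ) =>
      f xuw.1 xuw.2.1 xuw.2.2)
    (π : (Fin m → ℝ) → (Fin n → ℝ)) (hπ : Measurable π)
    (x₀ : Fin m → ℝ) (t i : ℕ) :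
    Measurable (trajFun f π x₀ t i) := by
  induction i with
  | zero => exact measurable_const
  | succ i ih =>
      by_cases h : i ∈ Finset.range t
      · have : trajFun f π x₀ t (i+1) = fun z =>
          f (trajFun f π x₀ t i z) (π (trajFun f π x₀ t i z)) (z ⟨i, h⟩) := by
            funext z; simp [trajFun, h]
        rw [this]
        exact hf.comp (ih.prodMk ((hπ.comp ih).prodMk (measurable_pi_apply _)))
      · have : trajFun f π x₀ t (i+1) = fun _ => x₀ := by
          funext z; simp [trajFun, h]
        rw [this]; exact measurable_const

/-- The process `(Y t)` obtained from an RASM `V` along the trajectory process — equal to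
`V (x_t)` until either the target set is reached (after which it is `0`) or the level
`c = 1/(1-p)` is exceeded by `V` (after which it is `c`) — is a nonnegative supermartingale
with respect to the filtration generated by the trajectory: each `Y t` is `ℱ t`-measurable,
integrable, nonnegative, and `𝔼[Y (t+1) ∣ ℱ t] ≤ Y t` almost surely. -/
theorem rasm_induces_nonneg_supermartingale
    {m n q : ℕ}
    (𝒳 : Set (Fin m → ℝ)) (hXcpt : IsCompact 𝒳) (hXmeas : MeasurableSet 𝒳)
    (f : (Fin m → ℝ) → (Fin n → ℝ) → (Fin q → ℝ) → (Fin m → ℝ))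
    (hf : Measurable fun xuw : (Fin m → ℝ) × (Fin n → ℝ) × (Fin q → ℝ) =>
      f xuw.1 xuw.2.1 xuw.2.2)
    (π : (Fin m → ℝ) → (Fin n → ℝ)) (hπ : Measurable π)
    (d : Measure (Fin q → ℝ)) [IsProbabilityMeasure d]
    (hinv : ∀ x ∈ 𝒳, ∀ w ∈ measureSupport d, f x (π x) w ∈ 𝒳)
    (X0 Xt Xu : Set (Fin m → ℝ))
    (hX0sub : X0 ⊆ 𝒳) (hXtsub : Xt ⊆ 𝒳) (hXusub : Xu ⊆ 𝒳)
    (hX0meas : MeasurableSet X0) (hXtmeas : MeasurableSet Xt) (hXumeas : MeasurableSet Xu)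
    (hdisj : Disjoint Xt Xu)
    (p : ℝ) (hp0 : 0 ≤ p) (hp1 : p < 1)
    (c : ℝ) (hc : c = 1 / (1 - p))
    {Ω : Type*} {m0 : MeasurableSpace Ω} (μ : Measure Ω) [IsProbabilityMeasure μ]
    (ω : ℕ → Ω → (Fin q → ℝ))
    (hωmeas : ∀ t, Measurable (ω t))
    (hωindep : iIndepFun ω μ)
    (hωlaw : ∀ t, μ.map (ω t) = d)
    (x₀ : Fin m → ℝ) (hx₀ : x₀ ∈ X0)
    (traj : ℕ → Ω → (Fin m → ℝ))
    (htraj0 : ∀ ϖ, traj 0 ϖ = x₀)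
    (htraj : ∀ t ϖ, traj (t + 1) ϖ = f (traj t ϖ) (π (traj t ϖ)) (ω t ϖ))
    (V : (Fin m → ℝ) → ℝ) (hVcont : Continuous V)
    (hVnonneg : ∀ x ∈ 𝒳, 0 ≤ V x)
    (hVinit : ∀ x ∈ X0, V x ≤ 1)
    (hVunsafe : ∀ x ∈ Xu, c ≤ V x)
    (hVdec : ∃ ε > 0, ∀ x ∈ 𝒳 \ Xt, V x ≤ c →
      ∫ w, V (f x (π x) w) ∂d ≤ V x - ε)
    (ℱ : Filtration ℕ m0)
    (hℱ : ∀ t, ℱ t = ⨆ i ∈ Set.Iic t,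
      MeasurableSpace.comap (traj i) (inferInstance : MeasurableSpace (Fin m → ℝ)))
    (Y : ℕ → Ω → ℝ)
    (hY : ∀ t ϖ, Y t ϖ =
      if ∀ i ≤ t, traj i ϖ ∉ Xt ∧ V (traj i ϖ) < c then V (traj t ϖ)
      else if ∃ i ≤ t, traj i ϖ ∈ Xt ∧ ∀ j ≤ i, V (traj j ϖ) < c then 0
      else c) :
    (∀ t, StronglyMeasurable[ℱ t] (Y t)) ∧ (∀ t, Integrable (Y t) μ)
      ∧ (∀ t, 0 ≤ᵐ[μ] Y t) ∧ (∀ t, μ[Y (t + 1)|ℱ t] ≤ᵐ[μ] Y t) := by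
  obtain ⟨ε, hε, hdec⟩ := hVdec
  have hp : 0 < 1 - p := by linarith
  have hc0 : 0 < c := by rw [hc]; positivity
  -- truncated V
  set W' : (Fin m → ℝ) → ℝ := fun x => min c (max (V x) 0) with hW'def
  have hW'meas : Measurable W' :=
    (continuous_const.min ((hVcont.max continuous_const))).measurable
  have hW'0 : ∀ x, 0 ≤ W' x := fun x => le_min hc0.le (le_max_right _ _)
  have hW'c : ∀ x, W' x ≤ c := fun x => min_le_left _ _
  have hW'eq : ∀ x, 0 ≤ V x → V x < c → W' x = V x := by
    intro x h0 hlt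
    simp only [hW'def]; rw [max_eq_left h0, min_eq_right hlt.le]
  have hW'le : ∀ x, 0 ≤ V x → W' x ≤ V x := by
    intro x h0
    simp only [hW'def]; rw [max_eq_left h0]; exact min_le_right _ _
  have hW'gec : ∀ x, c ≤ V x → W' x = c := by
    intro x hcx
    simp only [hW'def]
    rw [min_eq_left]; exact hcx.trans (le_max_left _ _)
  -- bound on V over 𝒳
  obtain ⟨C, hC⟩ : ∃ C : ℝ, ∀ x ∈ 𝒳, |V x| ≤ C := by
    obtain ⟨C, hC⟩ := hXcpt.exists_bound_of_continuousOn hVcont.continuousOn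
    exact ⟨C, fun x hx => by simpa using hC x hx⟩
  -- measurability of the trajectory
  have htrajMeas : ∀ i, Measurable (traj i) := by
    intro i
    induction i with
    | zero =>
        have : traj 0 = fun _ => x₀ := funext htraj0
        rw [this]; exact measurable_const
    | succ i ih =>
        have : traj (i+1) = fun ϖ => f (traj i ϖ) (π (traj i ϖ)) (ω i ϖ) := funext (htraj i)
        rw [this]
        exact hf.comp (ih.prodMk ((hπ.comp ih).prodMk (hωmeas i)))
  have htrajF : ∀ t i, i ≤ t → Measurable[ℱ t] (traj i) := by
    intro t i hi
    have hle : MeasurableSpace.comap (traj i) inferInstance ≤ ℱ t := by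
      rw [hℱ t]
      exact le_biSup (fun i => MeasurableSpace.comap (traj i) (inferInstance : MeasurableSpace (Fin m → ℝ))) (Set.mem_Iic.mpr hi)
    exact fun s hs => hle _ ⟨s, hs, rfl⟩
  -- the "still running" events
  have hA1 : ∀ t, MeasurableSet[ℱ t] {ϖ | ∀ i ≤ t, traj i ϖ ∉ Xt ∧ V (traj i ϖ) < c} := by
    intro t
    have heq : {ϖ | ∀ i ≤ t, traj i ϖ ∉ Xt ∧ V (traj i ϖ) < c}
        = ⋂ i, ⋂ (_ : i ≤ t), traj i ⁻¹' (Xtᶜ ∩ V ⁻¹' Set.Iio c) := by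
      ext ϖ; simp [Set.mem_iInter]
    rw [heq]
    exact MeasurableSet.iInter fun i => MeasurableSet.iInter fun hi =>
      htrajF t i hi (hXtmeas.compl.inter (hVcont.measurable measurableSet_Iio))
  have hA2 : ∀ t, MeasurableSet[ℱ t]
      {ϖ | ∃ i ≤ t, traj i ϖ ∈ Xt ∧ ∀ j ≤ i, V (traj j ϖ) < c} := by
    intro t
    have heq : {ϖ | ∃ i ≤ t, traj i ϖ ∈ Xt ∧ ∀ j ≤ i, V (traj j ϖ) < c}
        = ⋃ i, ⋃ (_ : i ≤ t), (traj i ⁻¹' Xt ∩ ⋂ j, ⋂ (_ : j ≤ i), traj j ⁻¹' (V ⁻¹' Set.Iio c)) := by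
      ext ϖ
      simp only [Set.mem_setOf_eq, Set.mem_iUnion, Set.mem_inter_iff, Set.mem_iInter,
        Set.mem_preimage, Set.mem_Iio]
      tauto
    rw [heq]
    refine MeasurableSet.iUnion fun i => MeasurableSet.iUnion fun hi => ?_
    refine (htrajF t i hi hXtmeas).inter ?_
    exact MeasurableSet.iInter fun j => MeasurableSet.iInter fun hj =>
      htrajF t j (hj.trans hi) (hVcont.measurable measurableSet_Iio)
  -- measurability of Y
  have hYmeas : ∀ t, Measurable[ℱ t] (Y t) := by
    intro t
    have heq : Y t = fun ϖ =>
        if ϖ ∈ {ϖ | ∀ i ≤ t, traj i ϖ ∉ Xt ∧ V (traj i ϖ) < c} then V (traj t ϖ)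
        else if ϖ ∈ {ϖ | ∃ i ≤ t, traj i ϖ ∈ Xt ∧ ∀ j ≤ i, V (traj j ϖ) < c} then 0 else c := by
      funext ϖ; rw [hY t ϖ]; rfl
    rw [heq]
    exact Measurable.ite (hA1 t) (hVcont.measurable.comp (htrajF t t le_rfl))
      (Measurable.ite (hA2 t) measurable_const measurable_const)
  -- almost-sure good event
  set G : Set Ω := ⋂ i, ω i ⁻¹' (measureSupport d) with hGdef
  have hGae : ∀ᵐ ϖ ∂μ, ϖ ∈ G := by
    rw [ae_iff]
    have hcompl : {ϖ | ¬ ϖ ∈ G} = ⋃ i, ω i ⁻¹' (measureSupport d)ᶜ := by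
      ext ϖ
      simp [hGdef]
    rw [hcompl]
    refine measure_iUnion_null fun i => ?_
    have hm : MeasurableSet (measureSupport d)ᶜ :=
      (measureSupport_isClosed d).measurableSet.compl
    have h1 : (μ.map (ω i)) (measureSupport d)ᶜ = μ (ω i ⁻¹' (measureSupport d)ᶜ) :=
      Measure.map_apply (hωmeas i) hm
    rw [hωlaw i, measureSupport_compl_null d] at h1
    exact h1.symm
  have hGtraj : ∀ ϖ ∈ G, ∀ i, traj i ϖ ∈ 𝒳 := by
    intro ϖ hϖ i
    induction i with
    | zero => rw [htraj0]; exact hX0sub hx₀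
    | succ i ih =>
        rw [htraj]
        exact hinv _ ih _ (Set.mem_iInter.mp hϖ i)
  -- bounds on Y on the good event
  have hYbdd : ∀ ϖ ∈ G, ∀ t, 0 ≤ Y t ϖ ∧ Y t ϖ ≤ c := by
    intro ϖ hϖ t
    rw [hY t ϖ]
    split_ifs with h1 h2
    · exact ⟨hVnonneg _ (hGtraj ϖ hϖ t), (h1 t le_rfl).2.le⟩
    · exact ⟨le_rfl, hc0.le⟩
    · exact ⟨hc0.le, le_rfl⟩
  have hYint : ∀ t, Integrable (Y t) μ := by
    intro t
    refine Integrable.mono' (integrable_const c)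
      ((hYmeas t).mono (ℱ.le t) le_rfl).aestronglyMeasurable ?_
    filter_upwards [hGae] with ϖ h
    rw [Real.norm_eq_abs, abs_le]
    exact ⟨by linarith [(hYbdd ϖ h t).1, hc0.le], (hYbdd ϖ h t).2⟩
  -- integrability helpers
  have hbddInt : ∀ (h : Ω → ℝ), Measurable h → (∀ ϖ, 0 ≤ h ϖ) → (∀ ϖ, h ϖ ≤ c) →
      Integrable h μ := by
    intro h hm h0 h1
    refine Integrable.mono' (integrable_const c) hm.aestronglyMeasurable ?_
    exact Filter.Eventually.of_forall fun ϖ => by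
      rw [Real.norm_eq_abs, abs_le]; exact ⟨by linarith [h0 ϖ], h1 ϖ⟩
  have hsuppae : ∀ᵐ w ∂d, w ∈ measureSupport d := by
    rw [ae_iff]
    have : {w | ¬ w ∈ measureSupport d} = (measureSupport d)ᶜ := rfl
    rw [this, measureSupport_compl_null d]
  -- the averaged truncated value function
  set Φ : (Fin m → ℝ) → ℝ := fun x => ∫ w, W' (f x (π x) w) ∂d with hΦdef
  have hfxw : Measurable (fun xw : (Fin m → ℝ) × (Fin q → ℝ) => f xw.1 (π xw.1) xw.2) :=
    hf.comp (measurable_fst.prodMk ((hπ.comp measurable_fst).prodMk measurable_snd))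
  have hΦsm : StronglyMeasurable Φ := by
    have : Φ = fun x => ∫ w,
        (fun xw : (Fin m → ℝ) × (Fin q → ℝ) => W' (f xw.1 (π xw.1) xw.2)) (x, w) ∂d := rfl
    rw [this]
    exact (hW'meas.comp hfxw).stronglyMeasurable.integral_prod_right'
  have hΦ0 : ∀ x, 0 ≤ Φ x := fun x => integral_nonneg fun w => hW'0 _
  have hΦc : ∀ x, Φ x ≤ c := by
    intro x
    calc Φ x ≤ ∫ _, c ∂d := by
          refine integral_mono ?_ (integrable_const c) fun w => hW'c _
          refine Integrable.mono' (integrable_const c)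
            ((hW'meas.comp (hf.comp (measurable_const.prodMk
              (measurable_const.prodMk measurable_id)))).aestronglyMeasurable) ?_
          exact Filter.Eventually.of_forall fun w => by
            rw [Real.norm_eq_abs, abs_le]; exact ⟨by linarith [hW'0 (f x (π x) w)], hW'c _⟩
      _ = c := by simp
  -- key pointwise decrease property of Φ
  have hΦdec : ∀ x ∈ 𝒳, x ∉ Xt → V x < c → Φ x ≤ V x - ε := by
    intro x hx hxt hVx
    have hVint : Integrable (fun w => V (f x (π x) w)) d := by
      refine Integrable.mono' (integrable_const C)
        ((hVcont.measurable.comp (hf.comp (measurable_const.prodMk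
          (measurable_const.prodMk measurable_id)))).aestronglyMeasurable) ?_
      filter_upwards [hsuppae] with w hw
      rw [Real.norm_eq_abs]
      exact hC _ (hinv x hx w hw)
    have hW'int : Integrable (fun w => W' (f x (π x) w)) d := by
      refine Integrable.mono' (integrable_const c)
        ((hW'meas.comp (hf.comp (measurable_const.prodMk
          (measurable_const.prodMk measurable_id)))).aestronglyMeasurable) ?_
      exact Filter.Eventually.of_forall fun w => by
        rw [Real.norm_eq_abs, abs_le]; exact ⟨by linarith [hW'0 (f x (π x) w)], hW'c _⟩
    have h1 : Φ x ≤ ∫ w, V (f x (π x) w) ∂d := by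
      refine integral_mono_ae hW'int hVint ?_
      filter_upwards [hsuppae] with w hw
      exact hW'le _ (hVnonneg _ (hinv x hx w hw))
    exact h1.trans (hdec x ⟨hx, hxt⟩ hVx.le)
  -- the main conditional-expectation step
  have key : ∀ t, μ[Y (t + 1)|ℱ t] ≤ᵐ[μ] Y t := by
    intro t
    -- the process up to time t, as a single random vector
    set Z : Ω → (Fin (t+1) → (Fin m → ℝ)) := fun ϖ i => traj i ϖ with hZdef
    have hZmeas : Measurable Z := measurable_pi_lambda _ fun i => htrajMeas i
    have hFeq : ℱ t = MeasurableSpace.comap Z MeasurableSpace.pi := by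
      apply le_antisymm
      · rw [hℱ t]
        refine iSup₂_le fun i hi => ?_
        have hi' : i ≤ t := hi
        have h1 : Measurable[MeasurableSpace.comap Z MeasurableSpace.pi] (traj i) := by
          have hZm : Measurable[MeasurableSpace.comap Z MeasurableSpace.pi] Z :=
            measurable_iff_comap_le.mpr le_rfl
          have heq : traj i = (fun z : Fin (t+1) → (Fin m → ℝ) =>
              z (⟨i, Nat.lt_succ_of_le hi'⟩ : Fin (t+1))) ∘ Z := rfl
          rw [heq]
          exact (measurable_pi_apply _).comp hZm
        exact measurable_iff_comap_le.mp h1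
      · have hpi : (MeasurableSpace.pi : MeasurableSpace (Fin (t+1) → (Fin m → ℝ)))
            = ⨆ a : Fin (t+1), MeasurableSpace.comap (fun b => b a)
                (inferInstance : MeasurableSpace (Fin m → ℝ)) := rfl
        rw [hpi, MeasurableSpace.comap_iSup]
        refine iSup_le fun i => ?_
        rw [MeasurableSpace.comap_comp]
        have hcc : ((fun b : Fin (t+1) → (Fin m → ℝ) => b i) ∘ Z) = traj i := rfl
        rw [hcc, hℱ t]
        exact le_biSup (fun i => MeasurableSpace.comap (traj i)
          (inferInstance : MeasurableSpace (Fin m → ℝ)))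
          (Set.mem_Iic.mpr (Nat.lt_succ_iff.mp i.isLt))
    have hcomap : ∀ s : Set Ω, MeasurableSet[ℱ t] s →
        ∃ M : Set (Fin (t+1) → (Fin m → ℝ)), MeasurableSet M ∧ s = Z ⁻¹' M := by
      intro s hs
      rw [hFeq, MeasurableSpace.measurableSet_comap] at hs
      obtain ⟨M, hM, hMs⟩ := hs
      exact ⟨M, hM, hMs.symm⟩
    -- independence of the trajectory up to time t from the noise at time t
    have hindep : IndepFun Z (ω t) μ := by
      have hdisjST : Disjoint (Finset.range t) ({t} : Finset ℕ) := by simp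
      have base := hωindep.indepFun_finset (Finset.range t) {t} hdisjST hωmeas
      set φ : (↥(Finset.range t) → (Fin q → ℝ)) → (Fin (t+1) → (Fin m → ℝ)) :=
        fun z i => trajFun f π x₀ t i z with hφdef
      have hφmeas : Measurable φ :=
        measurable_pi_lambda _ fun i => trajFun_measurable f hf π hπ x₀ t i
      set ψ : (↥({t} : Finset ℕ) → (Fin q → ℝ)) → (Fin q → ℝ) :=
        fun z => z ⟨t, by simp⟩ with hψdef
      have hψmeas : Measurable ψ := measurable_pi_apply _
      have h2 := base.comp hφmeas hψmeas
      have htrajFunEq : ∀ i, i ≤ t → ∀ ϖ,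
          trajFun f π x₀ t i (fun j : ↥(Finset.range t) => ω j ϖ) = traj i ϖ := by
        intro i
        induction i with
        | zero => intro _ ϖ; rw [htraj0]; rfl
        | succ i ih =>
            intro hi ϖ
            have hit : i ∈ Finset.range t := Finset.mem_range.mpr (Nat.lt_of_succ_le hi)
            have hrec : trajFun f π x₀ t (i+1) (fun j : ↥(Finset.range t) => ω j ϖ)
                = f (trajFun f π x₀ t i (fun j : ↥(Finset.range t) => ω j ϖ))
                    (π (trajFun f π x₀ t i (fun j : ↥(Finset.range t) => ω j ϖ)))
                    (ω i ϖ) := by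
              simp [trajFun, hit]
            rw [hrec, ih (Nat.le_of_succ_le hi) ϖ, htraj i ϖ]
      have hZeq : (φ ∘ fun a (i : ↥(Finset.range t)) => ω i a) = Z := by
        funext ϖ
        funext i
        exact htrajFunEq i (Nat.lt_succ_iff.mp i.isLt) ϖ
      have hωeq : (ψ ∘ fun a (i : ↥({t} : Finset ℕ)) => ω i a) = ω t := rfl
      rw [hZeq, hωeq] at h2
      exact h2
    -- the freezing identity
    have hWint : Integrable (fun ϖ => W' (traj (t+1) ϖ)) μ :=
      hbddInt _ (hW'meas.comp (htrajMeas (t+1))) (fun ϖ => hW'0 _) (fun ϖ => hW'c _)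
    have hfreeze : ∀ s : Set Ω, MeasurableSet[ℱ t] s →
        ∫ ϖ in s, Φ (traj t ϖ) ∂μ = ∫ ϖ in s, W' (traj (t+1) ϖ) ∂μ := by
      intro s hs
      obtain ⟨M, hM, rfl⟩ := hcomap s hs
      set g : (Fin (t+1) → (Fin m → ℝ)) × (Fin q → ℝ) → ℝ :=
        fun zw => Set.indicator M (fun _ => (1:ℝ)) zw.1 *
          W' (f (zw.1 (Fin.last t)) (π (zw.1 (Fin.last t))) zw.2) with hgdef
      have hgmeas : Measurable g := by
        apply Measurable.mul
        · exact (measurable_const.indicator hM).comp measurable_fst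
        · have hproj : Measurable (fun zw : (Fin (t+1) → (Fin m → ℝ)) × (Fin q → ℝ) =>
              ((zw.1 (Fin.last t), (π (zw.1 (Fin.last t)), zw.2)) :
                (Fin m → ℝ) × (Fin n → ℝ) × (Fin q → ℝ))) :=
            ((measurable_pi_apply _).comp measurable_fst).prodMk
              ((hπ.comp ((measurable_pi_apply _).comp measurable_fst)).prodMk measurable_snd)
          exact hW'meas.comp (hf.comp hproj)
      have hgC : ∀ p, |g p| ≤ c := by
        intro pp
        rw [hgdef]
        simp only [abs_mul]
        have h1 : |Set.indicator M (fun _ => (1:ℝ)) pp.1| ≤ 1 := by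
          by_cases hp1 : pp.1 ∈ M <;> simp [hp1]
        have h2 : |W' (f (pp.1 (Fin.last t)) (π (pp.1 (Fin.last t))) pp.2)| ≤ c :=
          abs_le.mpr ⟨by linarith [hW'0 (f (pp.1 (Fin.last t)) (π (pp.1 (Fin.last t))) pp.2)],
            hW'c _⟩
        calc |Set.indicator M (fun _ => (1:ℝ)) pp.1| *
              |W' (f (pp.1 (Fin.last t)) (π (pp.1 (Fin.last t))) pp.2)|
            ≤ 1 * c := mul_le_mul h1 h2 (abs_nonneg _) zero_le_one
          _ = c := one_mul c
      have hmain := freeze_integral μ d Z (ω t) hZmeas (hωmeas t) hindep (hωlaw t) g hgmeas c hgC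
      have hlast : ∀ ϖ, Z ϖ (Fin.last t) = traj t ϖ := fun ϖ => rfl
      have hL : ∀ ϖ, g (Z ϖ, ω t ϖ)
          = Set.indicator (Z ⁻¹' M) (fun ϖ => W' (traj (t+1) ϖ)) ϖ := by
        intro ϖ
        by_cases hϖ : Z ϖ ∈ M
        · rw [hgdef]
          simp only [Set.indicator_of_mem hϖ, Set.indicator_of_mem (show ϖ ∈ Z ⁻¹' M from hϖ)]
          rw [hlast, one_mul, htraj t ϖ]
        · rw [hgdef]
          simp only [Set.indicator_of_notMem hϖ,
            Set.indicator_of_notMem (show ϖ ∉ Z ⁻¹' M from hϖ), zero_mul]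
      have hR : ∀ ϖ, (∫ w, g (Z ϖ, w) ∂d)
          = Set.indicator (Z ⁻¹' M) (fun ϖ => Φ (traj t ϖ)) ϖ := by
        intro ϖ
        by_cases hϖ : Z ϖ ∈ M
        · rw [Set.indicator_of_mem (show ϖ ∈ Z ⁻¹' M from hϖ)]
          have : ∀ w, g (Z ϖ, w) = W' (f (traj t ϖ) (π (traj t ϖ)) w) := by
            intro w
            rw [hgdef]
            simp only [Set.indicator_of_mem hϖ]
            rw [hlast, one_mul]
          rw [hΦdef]
          simp only [this]
        · rw [Set.indicator_of_notMem (show ϖ ∉ Z ⁻¹' M from hϖ)]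
          have : ∀ w, g (Z ϖ, w) = 0 := by
            intro w
            rw [hgdef]
            simp only [Set.indicator_of_notMem hϖ, zero_mul]
          simp only [this, integral_zero]
      calc ∫ ϖ in Z ⁻¹' M, Φ (traj t ϖ) ∂μ
          = ∫ ϖ, Set.indicator (Z ⁻¹' M) (fun ϖ => Φ (traj t ϖ)) ϖ ∂μ :=
            (integral_indicator (hZmeas hM)).symm
        _ = ∫ ϖ, (∫ w, g (Z ϖ, w) ∂d) ∂μ :=
            integral_congr_ae (Filter.Eventually.of_forall fun ϖ => (hR ϖ).symm)
        _ = ∫ ϖ, g (Z ϖ, ω t ϖ) ∂μ := hmain.symm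
        _ = ∫ ϖ, Set.indicator (Z ⁻¹' M) (fun ϖ => W' (traj (t+1) ϖ)) ϖ ∂μ :=
            integral_congr_ae (Filter.Eventually.of_forall hL)
        _ = ∫ ϖ in Z ⁻¹' M, W' (traj (t+1) ϖ) ∂μ := integral_indicator (hZmeas hM)
    -- identification of the conditional expectation
    have hE1 : (fun ϖ => Φ (traj t ϖ)) =ᵐ[μ] μ[fun ϖ => W' (traj (t+1) ϖ)|ℱ t] := by
      refine ae_eq_condExp_of_forall_setIntegral_eq (ℱ.le t) hWint
        (fun s hs _ => ?_) (fun s hs _ => hfreeze s hs) ?_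
      · exact (hbddInt _ (hΦsm.measurable.comp (htrajMeas t)) (fun ϖ => hΦ0 _)
          (fun ϖ => hΦc _)).integrableOn
      · exact StronglyMeasurable.aestronglyMeasurable
          (hΦsm.comp_measurable (htrajF t t le_rfl))
    -- the dominating process
    set A : Set Ω := {ϖ | ∀ i ≤ t, traj i ϖ ∉ Xt ∧ V (traj i ϖ) < c} with hAdef
    have hAm : MeasurableSet[ℱ t] A := hA1 t
    have hAm0 : MeasurableSet A := ℱ.le t _ hAm
    set U : Ω → ℝ := fun ϖ => if ϖ ∈ A then W' (traj (t+1) ϖ) else Y t ϖ with hUdef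
    have hUeq : U = A.indicator (fun ϖ => W' (traj (t+1) ϖ)) + Aᶜ.indicator (Y t) := by
      funext ϖ
      by_cases h : ϖ ∈ A <;> simp [hUdef, h]
    have hUint : Integrable U μ := by
      rw [hUeq]
      exact (hWint.indicator hAm0).add ((hYint t).indicator hAm0.compl)
    -- Y (t+1) ≤ U a.e.
    have hY1U : Y (t+1) ≤ᵐ[μ] U := by
      filter_upwards [hGae] with ϖ hϖ
      simp only [hUdef]
      by_cases h : ϖ ∈ A
      · rw [if_pos h]
        have hA' : ∀ i ≤ t, traj i ϖ ∉ Xt ∧ V (traj i ϖ) < c := h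
        rw [hY (t+1) ϖ]
        split_ifs with h1 h2
        · have h0 : 0 ≤ V (traj (t+1) ϖ) := hVnonneg _ (hGtraj ϖ hϖ (t+1))
          rw [hW'eq _ h0 (h1 (t+1) le_rfl).2]
        · exact hW'0 _
        · have hVc : c ≤ V (traj (t+1) ϖ) := by
            by_contra hlt
            push_neg at hlt
            have hall : ∀ j ≤ t+1, V (traj j ϖ) < c := by
              intro j hj
              rcases eq_or_lt_of_le hj with rfl | hjt
              · exact hlt
              · exact (hA' j (Nat.lt_succ_iff.mp hjt)).2
            push_neg at h1
            obtain ⟨i, hi, hPi⟩ := h1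
            have hXt' : traj i ϖ ∈ Xt := by
              by_contra hnot
              exact absurd (hPi hnot) (not_le.mpr (hall i hi))
            exact h2 ⟨i, hi, hXt', fun j hj => hall j (hj.trans hi)⟩
          rw [hW'gec _ hVc]
      · rw [if_neg h]
        have h' : ¬ ∀ i ≤ t, traj i ϖ ∉ Xt ∧ V (traj i ϖ) < c := h
        have hnot1 : ¬ ∀ i ≤ t+1, traj i ϖ ∉ Xt ∧ V (traj i ϖ) < c :=
          fun hcon => h' fun i hi => hcon i (hi.trans (Nat.le_succ t))
        rw [hY (t+1) ϖ, if_neg hnot1, hY t ϖ, if_neg h']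
        by_cases h2 : ∃ i ≤ t, traj i ϖ ∈ Xt ∧ ∀ j ≤ i, V (traj j ϖ) < c
        · obtain ⟨i, hi, hx, hall⟩ := h2
          rw [if_pos ⟨i, hi.trans (Nat.le_succ t), hx, hall⟩, if_pos ⟨i, hi, hx, hall⟩]
        · rw [if_neg h2, if_neg ?_]
          rintro ⟨i, hi, hx, hall⟩
          rcases Nat.lt_or_ge i (t+1) with hlt | hge
          · exact h2 ⟨i, Nat.lt_succ_iff.mp hlt, hx, hall⟩
          · have hieq : i = t+1 := le_antisymm hi hge
            subst hieq
            push_neg at h'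
            obtain ⟨k, hk, hPk⟩ := h'
            have hXk : traj k ϖ ∈ Xt := by
              by_contra hn
              exact absurd (hPk hn) (not_le.mpr (hall k (hk.trans (Nat.le_succ t))))
            exact h2 ⟨k, hk, hXk, fun j hj => hall j (hj.trans (hk.trans (Nat.le_succ t)))⟩
    have hstep1 : μ[Y (t + 1)|ℱ t] ≤ᵐ[μ] μ[U|ℱ t] := condExp_mono (hYint (t+1)) hUint hY1U
    have hstep2 : μ[U|ℱ t] =ᵐ[μ]
        A.indicator (fun ϖ => Φ (traj t ϖ)) + Aᶜ.indicator (Y t) := by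
      rw [hUeq]
      have hadd := condExp_add (μ := μ) (m := ℱ t) (hWint.indicator hAm0)
        ((hYint t).indicator hAm0.compl)
      refine hadd.trans ?_
      have h3 : μ[Aᶜ.indicator (Y t)|ℱ t] = Aᶜ.indicator (Y t) :=
        condExp_of_stronglyMeasurable (ℱ.le t)
          (((hYmeas t).indicator hAm.compl).stronglyMeasurable)
          ((hYint t).indicator hAm0.compl)
      have h2 := condExp_indicator (μ := μ) hWint hAm
      refine Filter.EventuallyEq.add (h2.trans ?_) (by rw [h3])
      filter_upwards [hE1] with ϖ hϖ
      by_cases h : ϖ ∈ A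
      · simp only [Set.indicator_of_mem h]
        exact hϖ.symm
      · simp only [Set.indicator_of_notMem h]
    have hstep3 : A.indicator (fun ϖ => Φ (traj t ϖ)) + Aᶜ.indicator (Y t) ≤ᵐ[μ] Y t := by
      filter_upwards [hGae] with ϖ hϖ
      by_cases h : ϖ ∈ A
      · have hnc : ϖ ∉ Aᶜ := by simp [h]
        simp only [Pi.add_apply, Set.indicator_of_mem h, Set.indicator_of_notMem hnc, add_zero]
        have hA' : ∀ i ≤ t, traj i ϖ ∉ Xt ∧ V (traj i ϖ) < c := h
        have hYt : Y t ϖ = V (traj t ϖ) := by rw [hY t ϖ, if_pos hA']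
        rw [hYt]
        have := hΦdec (traj t ϖ) (hGtraj ϖ hϖ t) (hA' t le_rfl).1 (hA' t le_rfl).2
        linarith
      · have hnc : ϖ ∈ Aᶜ := by simp [h]
        simp only [Pi.add_apply, Set.indicator_of_notMem h, Set.indicator_of_mem hnc, zero_add,
          le_refl]
    exact hstep1.trans (hstep2.le.trans hstep3)
  exact ⟨fun t => (hYmeas t).stronglyMeasurable, hYint,
    fun t => hGae.mono fun ϖ h => (hYbdd ϖ h t).1, key⟩
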